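/- Let n and m be positive integers, let E = {e₁,…,e_{2n}} be a set of 2n elements and let S₁,…,S_m be subsets of E. Construct the split graph G with vertex set {v₁,…,v_{2n}} ∪ {w₁,…,w_m}, where the vertices v₁,…,v_{2n} are pairwise adjacent, the vertices w₁,…,w_m are pairwise non-adjacent, and vᵢ is adjacent to w_j if and only if eᵢ ∉ S_j. Then E can be partitioned into n pairs such that every subset S_j contains both elements of at least one pair, if and only if G has an [n,2]-partition. -/

import Mathlib

/-- Reachability inside a set `S`: there is a walk from `u` to `v` all of whose
vertices lie in `S`. -/
def ReachIn {V : Type*} (G : SimpleGraph V) (S : Set V) (u v : V) : Prop :=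
  Relation.ReflTransGen (fun a b => G.Adj a b ∧ a ∈ S ∧ b ∈ S) u v

/-- The subgraph induced by `S` is connected. -/
def ConnectedIn {V : Type*} (G : SimpleGraph V) (S : Set V) : Prop :=
  ∀ u ∈ S, ∀ v ∈ S, ReachIn G S u v

/-- A `[λ,C]`-coloring of `G` with colors `Fin L`: every monochromatic component
(connected component of the subgraph induced by a color class) has at most `C`
vertices. -/
def IsLCColoring {V : Type*} (G : SimpleGraph V) (C : ℕ) {L : ℕ} (c : V → Fin L) : Prop :=
  ∀ v : V, {u | ReachIn G {w | c w = c v} v u}.ncard ≤ C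

/-- A `[λ,C]`-partition of `G`: a partition of the vertex set such that every part
induces a connected subgraph, every part has at most `C` vertices, and every
clique of `G` meets at most `L` parts. -/
def IsLCPartition {V : Type*} (G : SimpleGraph V) (L C : ℕ) (Ps : Set (Set V)) : Prop :=
  (∀ P ∈ Ps, P.Nonempty) ∧ Ps.PairwiseDisjoint id ∧ ⋃₀ Ps = Set.univ ∧
    (∀ P ∈ Ps, ConnectedIn G P ∧ P.ncard ≤ C) ∧
    ∀ K : Set V, G.IsClique K → {P ∈ Ps | (P ∩ K).Nonempty}.ncard ≤ L

/-- The split graph built from an instance of the set-partitioning problem: the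
element-vertices `Sum.inl i` are pairwise adjacent, the subset-vertices
`Sum.inr j` are pairwise non-adjacent, and `Sum.inl i` is adjacent to `Sum.inr j`
iff element `i` does not belong to the subset `S j`. -/
def spGraph (N m : ℕ) (S : Fin m → Set (Fin N)) : SimpleGraph (Fin N ⊕ Fin m) where
  Adj a b :=
    (∃ i j : Fin N, a = Sum.inl i ∧ b = Sum.inl j ∧ i ≠ j) ∨
    (∃ (i : Fin N) (j : Fin m), a = Sum.inl i ∧ b = Sum.inr j ∧ i ∉ S j) ∨
    (∃ (i : Fin N) (j : Fin m), a = Sum.inr j ∧ b = Sum.inl i ∧ i ∉ S j)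
  symm := by
    refine ⟨?_⟩
    rintro a b (⟨i, j, rfl, rfl, h⟩ | ⟨i, j, rfl, rfl, h⟩ | ⟨i, j, rfl, rfl, h⟩)
    · exact Or.inl ⟨j, i, rfl, rfl, h.symm⟩
    · exact Or.inr (Or.inr ⟨i, j, rfl, rfl, h⟩)
    · exact Or.inr (Or.inl ⟨i, j, rfl, rfl, h⟩)
  loopless := by
    refine ⟨?_⟩
    rintro a (⟨i, j, rfl, h, hne⟩ | ⟨i, j, rfl, h, _⟩ | ⟨i, j, rfl, h, _⟩)
    · exact hne (Sum.inl.inj h)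
    · simp at h
    · simp at h

section helpersSP
variable {N m : ℕ} {S : Fin m → Set (Fin N)}

lemma sp_adj_ll {i j : Fin N} : (spGraph N m S).Adj (Sum.inl i) (Sum.inl j) ↔ i ≠ j := by
  simp [spGraph]

lemma sp_adj_lr {i : Fin N} {j : Fin m} :
    (spGraph N m S).Adj (Sum.inl i) (Sum.inr j) ↔ i ∉ S j := by
  simp [spGraph]

lemma sp_adj_rr {j j' : Fin m} : ¬ (spGraph N m S).Adj (Sum.inr j) (Sum.inr j') := by
  simp [spGraph]

lemma sUnion_ncard_le {α : Type*} [Finite α] (M : Set (Set α)) (h : ∀ P ∈ M, P.ncard ≤ 2) :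
    (⋃₀ M).ncard ≤ 2 * M.ncard := by
  classical
  revert h
  refine Set.Finite.induction_on (motive := fun M _ => (∀ P ∈ M, P.ncard ≤ 2) → (⋃₀ M).ncard ≤ 2 * M.ncard)
    M (Set.toFinite M) (by simp) ?_
  intro P M' hPM hMfin ih h
  rw [Set.sUnion_insert, Set.ncard_insert_of_notMem hPM,
    Nat.mul_add, Nat.mul_one, Nat.add_comm (2 * M'.ncard) 2]
  refine le_trans (Set.ncard_union_le _ _) ?_
  exact Nat.add_le_add (h P (Set.mem_insert _ _))
    (ih fun Q hQ => h Q (Set.mem_insert_of_mem _ hQ))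

lemma le_sUnion_ncard {α : Type*} [Finite α] (M : Set (Set α)) (hd : M.PairwiseDisjoint id)
    (h : ∀ P ∈ M, 2 ≤ P.ncard) : 2 * M.ncard ≤ (⋃₀ M).ncard := by
  classical
  revert hd h
  refine Set.Finite.induction_on
    (motive := fun M _ => M.PairwiseDisjoint id → (∀ P ∈ M, 2 ≤ P.ncard) → 2 * M.ncard ≤ (⋃₀ M).ncard)
    M (Set.toFinite M) (by simp) ?_
  intro P M' hPM hMfin ih hd h
  have hdisj : Disjoint P (⋃₀ M') := by
    rw [Set.disjoint_sUnion_right]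
    intro Q hQ
    exact hd (Set.mem_insert _ _) (Set.mem_insert_of_mem _ hQ)
      (fun hEq => hPM (hEq ▸ hQ))
  rw [Set.sUnion_insert, Set.ncard_insert_of_notMem hPM,
    Nat.mul_add, Nat.mul_one, Set.ncard_union_eq hdisj, Nat.add_comm (2 * M'.ncard) 2]
  exact Nat.add_le_add (h P (Set.mem_insert _ _))
    (ih (hd.subset (Set.subset_insert _ _)) fun Q hQ => h Q (Set.mem_insert_of_mem _ hQ))


end helpersSP

/-- the `2n` elements can be partitioned into `n` pairs such that
every subset `S j` contains both elements of at least one pair, iff the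
associated split graph has an `[n,2]`-partition. -/
theorem sp_iff_cp (n m : ℕ) (hn : 0 < n) (hm : 0 < m)
    (S : Fin m → Set (Fin (2 * n))) :
    (∃ Ps : Set (Set (Fin (2 * n))),
      (∀ P ∈ Ps, P.Nonempty) ∧ Ps.PairwiseDisjoint id ∧ ⋃₀ Ps = Set.univ ∧
      (∀ P ∈ Ps, P.ncard = 2) ∧ (∀ j : Fin m, ∃ P ∈ Ps, P ⊆ S j)) ↔
    (∃ Ps : Set (Set (Fin (2 * n) ⊕ Fin m)),
      IsLCPartition (spGraph (2 * n) m S) n 2 Ps) := by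
  constructor
  · rintro ⟨Ps, hne, hdisj, hcov, hcard, hS⟩
    classical
    set V := Fin (2 * n) ⊕ Fin m
    set G := spGraph (2 * n) m S with hG
    set Qs : Set (Set V) :=
      {A | (∃ P ∈ Ps, A = Sum.inl '' P) ∨ (∃ j, A = {Sum.inr j})} with hQs
    -- |Ps| = n
    have hPsn : Ps.ncard = n := by
      have h1 := le_sUnion_ncard Ps hdisj (fun P hP => (hcard P hP).ge)
      have h2 := sUnion_ncard_le Ps (fun P hP => (hcard P hP).le)
      rw [hcov, Set.ncard_univ, Nat.card_eq_fintype_card, Fintype.card_fin] at h1 h2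
      omega
    -- nonempty
    have c1 : ∀ P ∈ Qs, P.Nonempty := by
      rintro A (⟨P, hP, rfl⟩ | ⟨j, rfl⟩)
      · exact (hne P hP).image _
      · exact ⟨Sum.inr j, rfl⟩
    -- disjoint
    have c2 : Qs.PairwiseDisjoint id := by
      rintro A (⟨P, hP, rfl⟩ | ⟨j, rfl⟩) B (⟨Q, hQ, rfl⟩ | ⟨j', rfl⟩) hAB <;> clear hQs
      · have hPQ : P ≠ Q := fun h => hAB (by rw [h])
        exact (Set.disjoint_image_iff Sum.inl_injective).mpr (hdisj hP hQ hPQ)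
      · refine Set.disjoint_left.mpr ?_
        rintro x ⟨a, _, rfl⟩ hx
        simp at hx
      · refine Set.disjoint_left.mpr ?_
        rintro x rfl ⟨a, _, hx⟩
        simp at hx
      · have hjj : j ≠ j' := fun h => hAB (by rw [h])
        refine Set.disjoint_left.mpr ?_
        rintro x rfl hx
        exact hjj (Sum.inr.inj hx)
    -- cover
    have c3 : ⋃₀ Qs = Set.univ := by
      rw [Set.eq_univ_iff_forall]
      rintro (i | j)
      · have : i ∈ ⋃₀ Ps := hcov ▸ Set.mem_univ i
        obtain ⟨P, hP, hiP⟩ := this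
        exact ⟨Sum.inl '' P, Or.inl ⟨P, hP, rfl⟩, ⟨i, hiP, rfl⟩⟩
      · exact ⟨{Sum.inr j}, Or.inr ⟨j, rfl⟩, rfl⟩
    -- connected and small
    have c4 : ∀ P ∈ Qs, ConnectedIn G P ∧ P.ncard ≤ 2 := by
      rintro A (⟨P, hP, rfl⟩ | ⟨j, rfl⟩)
      · constructor
        · rintro u ⟨a, ha, rfl⟩ v ⟨b, hb, rfl⟩
          by_cases hab : a = b
          · subst hab; exact Relation.ReflTransGen.refl
          · exact Relation.ReflTransGen.single
              ⟨sp_adj_ll.mpr hab, ⟨a, ha, rfl⟩, ⟨b, hb, rfl⟩⟩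
        · rw [Set.ncard_image_of_injective _ Sum.inl_injective, hcard P hP]
      · constructor
        · rintro u rfl v rfl; exact Relation.ReflTransGen.refl
        · simp [Set.ncard_singleton]
    -- clique bound
    have c5 : ∀ K : Set V, G.IsClique K → {P ∈ Qs | (P ∩ K).Nonempty}.ncard ≤ n := by
      intro K hK
      by_cases hKr : ∃ j, Sum.inr j ∈ K
      · obtain ⟨j₀, hj₀⟩ := hKr
        obtain ⟨P₀, hP₀, hP₀S⟩ := hS j₀
        have hsub : {P ∈ Qs | (P ∩ K).Nonempty} ⊆
            insert ({Sum.inr j₀} : Set V) ((fun P => Sum.inl '' P) '' (Ps \ {P₀})) := by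
          rintro A ⟨(⟨P, hP, rfl⟩ | ⟨j, rfl⟩), x, hxA, hxK⟩
          · obtain ⟨a, haP, rfl⟩ := hxA
            have hPne : P ≠ P₀ := by
              rintro rfl
              have hadj : G.Adj (Sum.inl a) (Sum.inr j₀) := hK hxK hj₀ (by simp)
              exact (sp_adj_lr.mp hadj) (hP₀S haP)
            exact Set.mem_insert_of_mem _ ⟨P, ⟨hP, hPne⟩, rfl⟩
          · have hj : j = j₀ := by
              by_contra hjj
              exact sp_adj_rr (hG ▸ hK (hxA ▸ hxK) hj₀ (fun h => hjj (Sum.inr.inj h)))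
            subst hj
            exact Set.mem_insert _ _
        calc {P ∈ Qs | (P ∩ K).Nonempty}.ncard
            ≤ (insert ({Sum.inr j₀} : Set V) ((fun P => Sum.inl '' P) '' (Ps \ {P₀}))).ncard :=
              Set.ncard_le_ncard hsub (Set.toFinite _)
          _ ≤ ((fun P => Sum.inl '' P) '' (Ps \ {P₀})).ncard + 1 := Set.ncard_insert_le _ _
          _ ≤ (Ps \ {P₀}).ncard + 1 := by
              exact Nat.add_le_add_right (Set.ncard_image_le (Set.toFinite _)) 1
          _ = n := by
              rw [Set.ncard_diff_singleton_of_mem hP₀, hPsn]; omega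
      · push_neg at hKr
        have hsub : {P ∈ Qs | (P ∩ K).Nonempty} ⊆ (fun P => Sum.inl '' P) '' Ps := by
          rintro A ⟨(⟨P, hP, rfl⟩ | ⟨j, rfl⟩), x, hxA, hxK⟩
          · exact ⟨P, hP, rfl⟩
          · exact absurd (hxA ▸ hxK) (hKr j)
        calc {P ∈ Qs | (P ∩ K).Nonempty}.ncard
            ≤ ((fun P => Sum.inl '' P) '' Ps).ncard := Set.ncard_le_ncard hsub (Set.toFinite _)
          _ ≤ Ps.ncard := Set.ncard_image_le (Set.toFinite _)
          _ = n := hPsn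
    exact ⟨Qs, c1, c2, c3, c4, c5⟩
  · rintro ⟨Qs, hne, hdisj, hcov, hcc, hclq⟩
    classical
    let V := Fin (2 * n) ⊕ Fin m
    let G := spGraph (2 * n) m S
    set K₀ : Set V := Set.range Sum.inl with hK₀def
    have hK₀ : G.IsClique K₀ := by
      rintro x ⟨i, rfl⟩ y ⟨j, rfl⟩ hxy
      exact sp_adj_ll.mpr (fun h => hxy (by rw [h]))
    set M : Set (Set V) := {P ∈ Qs | (P ∩ K₀).Nonempty} with hMdef
    have hMn : M.ncard ≤ n := hclq K₀ hK₀
    have hcovM : K₀ ⊆ ⋃₀ M := by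
      rintro x hx
      have : x ∈ ⋃₀ Qs := hcov ▸ Set.mem_univ x
      obtain ⟨P, hP, hxP⟩ := this
      exact ⟨P, ⟨hP, x, hxP, hx⟩, hxP⟩
    have hM2 : ∀ P ∈ M, P.ncard ≤ 2 := fun P hP => (hcc P hP.1).2
    have hK₀card : K₀.ncard = 2 * n := by
      rw [hK₀def, ← Set.image_univ, Set.ncard_image_of_injective _ Sum.inl_injective,
        Set.ncard_univ, Nat.card_eq_fintype_card, Fintype.card_fin]
    have hUle : (⋃₀ M).ncard ≤ 2 * n := by
      calc (⋃₀ M).ncard ≤ 2 * M.ncard := sUnion_ncard_le M hM2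
        _ ≤ 2 * n := by omega
    have hU : K₀ = ⋃₀ M := Set.eq_of_subset_of_ncard_le hcovM (by rw [hK₀card]; exact hUle)
      (Set.toFinite _)
    have hMn' : M.ncard = n := by
      have : 2 * n ≤ 2 * M.ncard := by
        rw [← hK₀card, hU]; exact sUnion_ncard_le M hM2
      omega
    have hMrange : ∀ P ∈ M, P ⊆ K₀ := fun P hP => hU ▸ Set.subset_sUnion_of_mem hP
    have hUcard : (⋃₀ M).ncard = 2 * n := by rw [← hU, hK₀card]
    -- every part of M has exactly 2 elements
    have hM2' : ∀ P ∈ M, P.ncard = 2 := by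
      intro P₀ hP₀
      by_contra hlt
      have h1 : P₀.ncard ≤ 1 := by
        have := hM2 P₀ hP₀; omega
      have hins : insert P₀ (M \ {P₀}) = M := by
        rw [Set.insert_diff_singleton, Set.insert_eq_self.mpr hP₀]
      have hsplit : (⋃₀ M).ncard ≤ P₀.ncard + (⋃₀ (M \ {P₀})).ncard := by
        conv_lhs => rw [← hins, Set.sUnion_insert]
        exact Set.ncard_union_le _ _
      have h3 : (⋃₀ (M \ {P₀})).ncard ≤ 2 * (M \ {P₀}).ncard :=
        sUnion_ncard_le _ (fun Q hQ => hM2 Q hQ.1)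
      have h4 : (M \ {P₀}).ncard = M.ncard - 1 := Set.ncard_diff_singleton_of_mem hP₀
      rw [hUcard] at hsplit
      omega
    -- the element partition
    refine ⟨(fun P => Sum.inl ⁻¹' P) '' M, ?_, ?_, ?_, ?_, ?_⟩
    · rintro A ⟨P, hP, rfl⟩
      obtain ⟨x, hxP, hxK⟩ := hP.2
      obtain ⟨a, rfl⟩ := hxK
      exact ⟨a, hxP⟩
    · rintro A ⟨P, hP, rfl⟩ B ⟨Q, hQ, rfl⟩ hAB
      have hPQ : P ≠ Q := fun h => hAB (by rw [h])
      exact Set.disjoint_left.mpr fun x hxP hxQ =>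
        Set.disjoint_left.mp (hdisj hP.1 hQ.1 hPQ) hxP hxQ
    · rw [Set.eq_univ_iff_forall]
      intro i
      have : (Sum.inl i : V) ∈ ⋃₀ M := hcovM ⟨i, rfl⟩
      obtain ⟨P, hP, hiP⟩ := this
      exact ⟨Sum.inl ⁻¹' P, ⟨P, hP, rfl⟩, hiP⟩
    · rintro A ⟨P, hP, rfl⟩
      have himg : Sum.inl '' (Sum.inl ⁻¹' P) = P := by
        rw [Set.image_preimage_eq_inter_range]
        exact Set.inter_eq_left.mpr (hMrange P hP)
      have := Set.ncard_image_of_injective (f := (Sum.inl : Fin (2 * n) → Fin (2 * n) ⊕ Fin m))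
        (Sum.inl ⁻¹' P) Sum.inl_injective
      rw [himg] at this
      rw [← this, hM2' P hP]
    · intro j
      -- the part containing inr j
      have : (Sum.inr j : V) ∈ ⋃₀ Qs := hcov ▸ Set.mem_univ _
      obtain ⟨Qj, hQj, hjQj⟩ := this
      have hQjM : Qj ∉ M := by
        intro hmem
        obtain ⟨a, ha⟩ := hMrange Qj hmem hjQj
        simp at ha
      by_contra hcon
      push_neg at hcon
      -- the clique {inr j} ∪ inl '' (S j)ᶜ
      set Kj : Set V := {Sum.inr j} ∪ Sum.inl '' {i | i ∉ S j} with hKj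
      have hKjclq : G.IsClique Kj := by
        rintro x (rfl | ⟨a, ha, rfl⟩) y (rfl | ⟨b, hb, rfl⟩) hxy
        · exact absurd rfl hxy
        · exact (sp_adj_lr.mpr hb).symm
        · exact sp_adj_lr.mpr ha
        · exact sp_adj_ll.mpr (fun h => hxy (by rw [h]))
      have hsub : insert Qj M ⊆ {P ∈ Qs | (P ∩ Kj).Nonempty} := by
        rintro A (rfl | hA)
        · exact ⟨hQj, Sum.inr j, hjQj, Or.inl rfl⟩
        · refine ⟨hA.1, ?_⟩
          have hnsub := hcon (Sum.inl ⁻¹' A) ⟨A, hA, rfl⟩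
          obtain ⟨a, haA, haS⟩ := Set.not_subset.mp hnsub
          exact ⟨Sum.inl a, haA, Or.inr ⟨a, haS, rfl⟩⟩
      have hins : (insert Qj M).ncard = n + 1 := by
        rw [Set.ncard_insert_of_notMem hQjM (Set.toFinite _), hMn']
      have hb := hclq Kj hKjclq
      have hle := le_trans (Set.ncard_le_ncard hsub (Set.toFinite _)) hb
      rw [hins] at hle
      omega
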